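/- Let x* be a sparsest solution to: minimize ‖x‖₀ subject to ‖y − Ax‖₂ ≤ ε and Bx ≤ b, with support S, and let I = I(x*) be the set of active constraints of Bx* ≤ b. If |I(x*)| is maximal among all sparsest solutions, i.e., |I(x*)| = max{|I(x)| : x ∈ Λ} where Λ is the set of all sparsest solutions, then the matrix M* = [A_S; B_{I,S}] (vertical stacking) has full column rank. -/

import Mathlib

open Matrix Finset

/-- The ℓ₂ norm of a finite real vector. -/
noncomputable def l2 {ι : Type*} [Fintype ι] (v : ι → ℝ) : ℝ := Real.sqrt (∑ i, v i ^ 2)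

/-- The ℓ₀ "norm": number of nonzero components. -/
noncomputable def l0 {n : ℕ} (x : Fin n → ℝ) : ℕ :=
  (Finset.univ.filter fun i => x i ≠ 0).card

/-- The support of a vector as a finset. -/
noncomputable def spt {n : ℕ} (x : Fin n → ℝ) : Finset (Fin n) :=
  Finset.univ.filter fun i => x i ≠ 0

/-- Membership in the feasible set T = {x : ‖y - Ax‖₂ ≤ ε, Bx ≤ b}. -/
def feasible {m l n : ℕ} (A : Matrix (Fin m) (Fin n) ℝ) (B : Matrix (Fin l) (Fin n) ℝ)
    (y : Fin m → ℝ) (b : Fin l → ℝ) (ε : ℝ) (x : Fin n → ℝ) : Prop :=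
  l2 (y - A.mulVec x) ≤ ε ∧ ∀ i, B.mulVec x i ≤ b i

/-- x is a sparsest solution: feasible and minimizing ‖·‖₀ over T. -/
noncomputable def sparsest {m l n : ℕ} (A : Matrix (Fin m) (Fin n) ℝ)
    (B : Matrix (Fin l) (Fin n) ℝ) (y : Fin m → ℝ) (b : Fin l → ℝ) (ε : ℝ)
    (x : Fin n → ℝ) : Prop :=
  feasible A B y b ε x ∧ ∀ z, feasible A B y b ε z → l0 x ≤ l0 z

/-- Column submatrix indexed by S. -/
def colSub {m n : ℕ} (A : Matrix (Fin m) (Fin n) ℝ) (S : Finset (Fin n)) :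
    Matrix (Fin m) {j // j ∈ S} ℝ :=
  A.submatrix id Subtype.val

/-- Row-and-column submatrix with rows in I and columns in S. -/
def rcSub {l n : ℕ} (B : Matrix (Fin l) (Fin n) ℝ) (I : Finset (Fin l))
    (S : Finset (Fin n)) : Matrix {i // i ∈ I} {j // j ∈ S} ℝ :=
  B.submatrix Subtype.val Subtype.val

/-- Active index set of the constraints Bx ≤ b at x. -/
noncomputable def activeSet {l n : ℕ} (B : Matrix (Fin l) (Fin n) ℝ) (b : Fin l → ℝ)
    (x : Fin n → ℝ) : Finset (Fin l) :=
  Finset.univ.filter fun i => B.mulVec x i = b i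

lemma aux {m l n : ℕ} (A : Matrix (Fin m) (Fin n) ℝ) (B : Matrix (Fin l) (Fin n) ℝ)
    (y : Fin m → ℝ) (b : Fin l → ℝ) (ε : ℝ)
    (xs : Fin n → ℝ) (hxs : sparsest A B y b ε xs)
    (S : Finset (Fin n)) (hS : S = spt xs)
    (I : Finset (Fin l)) (hI : I = activeSet B b xs)
    (hmax : ∀ z : Fin n → ℝ, sparsest A B y b ε z →
      (activeSet B b z).card ≤ I.card)
    (d : {j // j ∈ S} → ℝ)
    (hA : (colSub A S).mulVec d = 0) (hB : (rcSub B I S).mulVec d = 0)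
    (j : {j // j ∈ S}) (hneg : xs j.val / d j < 0) : False := by
  have hdj : d j ≠ 0 := by
    intro h; rw [h, div_zero] at hneg; exact lt_irrefl _ hneg
  set dt : Fin n → ℝ := fun i => if h : i ∈ S then d ⟨i, h⟩ else 0 with hdt
  have hsum : ∀ (f : Fin n → ℝ),
      ∑ i, f i * dt i = ∑ jj : {j // j ∈ S}, f jj.val * d jj := by
    intro f
    have h1 : ∑ i ∈ S, f i * dt i = ∑ i, f i * dt i :=
      Finset.sum_subset (Finset.subset_univ S)
        (fun i _ hi => by simp [hdt, dif_neg hi])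
    have h2 : ∑ jj : {j // j ∈ S}, f jj.val * d jj = ∑ i ∈ S, f i * dt i := by
      rw [← Finset.sum_coe_sort S (fun i => f i * dt i)]
      exact Finset.sum_congr rfl (fun jj _ => by simp [hdt, dif_pos jj.2])
    exact (h2.trans h1).symm
  have hAdt : A.mulVec dt = 0 := by
    funext r
    have hr := congrFun hA r
    simp only [Matrix.mulVec, dotProduct, colSub, Matrix.submatrix_apply, id] at hr
    simp only [Matrix.mulVec, dotProduct, Pi.zero_apply]
    rw [hsum (A r)]
    exact hr
  have hBdtI : ∀ i ∈ I, B.mulVec dt i = 0 := by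
    intro i hi
    have hr := congrFun hB ⟨i, hi⟩
    simp only [Matrix.mulVec, dotProduct, rcSub, Matrix.submatrix_apply] at hr
    simp only [Matrix.mulVec, dotProduct]
    rw [hsum (B i)]
    exact hr
  set c := B.mulVec xs with hc
  have hstrict : ∀ i, i ∉ I → c i < b i := by
    intro i hi
    refine lt_of_le_of_ne (hxs.1.2 i) ?_
    rw [hI, activeSet] at hi
    simpa using hi
  set t0 := -(xs j.val) / d j with ht0def
  have ht0 : 0 < t0 := by rw [ht0def, neg_div]; linarith
  set F : Finset ℝ := insert t0 (((Finset.univ.filter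
      fun i => i ∉ I ∧ 0 < B.mulVec dt i)).image
      fun i => (b i - c i) / B.mulVec dt i) with hF
  have hFne : F.Nonempty := ⟨t0, Finset.mem_insert_self _ _⟩
  set tb := F.min' hFne with htbdef
  have htbpos : 0 < tb := by
    have htbmem : tb ∈ F := F.min'_mem hFne
    rw [hF, Finset.mem_insert] at htbmem
    rcases htbmem with h | h
    · rw [h]; exact ht0
    · obtain ⟨i, himem, heq⟩ := Finset.mem_image.mp h
      obtain ⟨-, hiI, hg⟩ := Finset.mem_filter.mp himem
      rw [← heq]
      exact div_pos (sub_pos.mpr (hstrict i hiI)) hg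
  have htble : tb ≤ t0 := F.min'_le t0 (Finset.mem_insert_self _ _)
  have htbs : ∀ i, i ∉ I → 0 < B.mulVec dt i →
      tb * B.mulVec dt i ≤ b i - c i := by
    intro i hiI hg
    have hmem : (b i - c i) / B.mulVec dt i ∈ F :=
      Finset.mem_insert_of_mem (Finset.mem_image_of_mem _
        (Finset.mem_filter.mpr ⟨Finset.mem_univ i, hiI, hg⟩))
    exact (le_div_iff₀ hg).mp (F.min'_le _ hmem)
  set xb : Fin n → ℝ := xs + tb • dt with hxb
  have hAxb : A.mulVec xb = A.mulVec xs := by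
    rw [hxb, Matrix.mulVec_add, Matrix.mulVec_smul, hAdt]; simp
  have hBxb : ∀ i, B.mulVec xb i = c i + tb * B.mulVec dt i := by
    intro i
    rw [hxb, Matrix.mulVec_add, Matrix.mulVec_smul]
    simp [hc]
  have hfeas : feasible A B y b ε xb := by
    constructor
    · rw [hAxb]; exact hxs.1.1
    · intro i
      rw [hBxb]
      by_cases hiI : i ∈ I
      · rw [hBdtI i hiI]
        have hci : c i = b i := by rw [hI, activeSet] at hiI; simpa using hiI
        simp [hci]
      · by_cases hg : 0 < B.mulVec dt i
        · have := htbs i hiI hg; linarith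
        · push_neg at hg
          have h1 : tb * B.mulVec dt i ≤ 0 :=
            mul_nonpos_of_nonneg_of_nonpos htbpos.le hg
          have := hstrict i hiI
          linarith
  have hspt : spt xb ⊆ S := by
    intro i hi
    by_contra hiS
    have hxsi : xs i = 0 := by
      by_contra hne
      exact hiS (hS ▸ Finset.mem_filter.mpr ⟨Finset.mem_univ i, hne⟩)
    have hdti : dt i = 0 := dif_neg hiS
    rw [spt, Finset.mem_filter] at hi
    exact hi.2 (by simp [hxb, hxsi, hdti])
  have hl0xs : l0 xs = S.card := by rw [hS]; rfl
  by_cases hz : ∃ i ∈ S, xb i = 0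
  · obtain ⟨i0, hi0S, hi0⟩ := hz
    have hsub : spt xb ⊆ S.erase i0 := by
      intro i hi
      refine Finset.mem_erase.mpr ⟨?_, hspt hi⟩
      intro h
      exact (Finset.mem_filter.mp hi).2 (h ▸ hi0)
    have h1 : l0 xb ≤ (S.erase i0).card := Finset.card_le_card hsub
    have h2 : (S.erase i0).card < S.card := Finset.card_erase_lt_of_mem hi0S
    have h3 := hxs.2 xb hfeas
    omega
  · push_neg at hz
    have hSsub : S ⊆ spt xb := fun i hi =>
      Finset.mem_filter.mpr ⟨Finset.mem_univ i, hz i hi⟩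
    have hsptx : spt xb = S := Finset.Subset.antisymm hspt hSsub
    have hl0 : l0 xb = l0 xs := by
      show (spt xb).card = _
      rw [hsptx, hl0xs]
    have hsp : sparsest A B y b ε xb := ⟨hfeas, fun z hzf => hl0 ▸ hxs.2 z hzf⟩
    have hxbj : xb j.val ≠ 0 := hz j.val j.2
    have htbne : tb ≠ t0 := by
      intro h
      apply hxbj
      have hdtj : dt j.val = d j := by simp [hdt, dif_pos j.2]
      show (xs + tb • dt) j.val = 0
      rw [Pi.add_apply, Pi.smul_apply, smul_eq_mul, hdtj, h, ht0def]
      field_simp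
      ring
    have htbmem : tb ∈ F := F.min'_mem hFne
    rw [hF, Finset.mem_insert] at htbmem
    rcases htbmem with h | h
    · exact htbne h
    · obtain ⟨i1, hi1mem, hi1eq⟩ := Finset.mem_image.mp h
      obtain ⟨-, hi1I, hg⟩ := Finset.mem_filter.mp hi1mem
      have hact1 : B.mulVec xb i1 = b i1 := by
        rw [hBxb, ← hi1eq, div_mul_cancel₀ _ hg.ne']
        ring
      have hIsub : insert i1 I ⊆ activeSet B b xb := by
        intro i hi
        rcases Finset.mem_insert.mp hi with rfl | hiI
        · exact Finset.mem_filter.mpr ⟨Finset.mem_univ _, hact1⟩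
        · have hci : c i = b i := by rw [hI, activeSet] at hiI; simpa using hiI
          refine Finset.mem_filter.mpr ⟨Finset.mem_univ _, ?_⟩
          rw [hBxb, hBdtI i hiI]
          simpa using hci
      have h1 := hmax xb hsp
      have h2 : I.card + 1 ≤ (activeSet B b xb).card := by
        calc I.card + 1 = (insert i1 I).card :=
              (Finset.card_insert_of_notMem hi1I).symm
          _ ≤ _ := Finset.card_le_card hIsub
      omega

/-- if x* is a sparsest solution with maximal number of active
constraints, then M* = [A_S; B_{I,S}] has full column rank. -/
theorem stmt2 {m l n : ℕ} (A : Matrix (Fin m) (Fin n) ℝ) (B : Matrix (Fin l) (Fin n) ℝ)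
    (y : Fin m → ℝ) (b : Fin l → ℝ) (ε : ℝ) (hε : 0 ≤ ε)
    (xs : Fin n → ℝ) (hxs : sparsest A B y b ε xs)
    (S : Finset (Fin n)) (hS : S = spt xs)
    (I : Finset (Fin l)) (hI : I = activeSet B b xs)
    (hmax : ∀ z : Fin n → ℝ, sparsest A B y b ε z →
      (activeSet B b z).card ≤ I.card) :
    ∀ d : {j // j ∈ S} → ℝ,
      (colSub A S).mulVec d = 0 → (rcSub B I S).mulVec d = 0 → d = 0 := by
  intro d hA hB
  by_contra hd
  have hex : ∃ j, d j ≠ 0 := by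
    by_contra h
    push_neg at h
    exact hd (funext h)
  obtain ⟨j, hdj⟩ := hex
  have hxj : xs j.val ≠ 0 := by
    have hj2 : (j : Fin n) ∈ spt xs := by rw [← hS]; exact j.2
    rw [spt, Finset.mem_filter] at hj2
    exact hj2.2
  rcases lt_or_gt_of_ne (div_ne_zero hxj hdj) with h | h
  · exact aux A B y b ε xs hxs S hS I hI hmax d hA hB j h
  · refine aux A B y b ε xs hxs S hS I hI hmax (-d) ?_ ?_ j ?_
    · rw [Matrix.mulVec_neg, hA, neg_zero]
    · rw [Matrix.mulVec_neg, hB, neg_zero]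
    · rw [Pi.neg_apply, div_neg]
      linarith
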